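/- Let z = (0, z_y, z_z) ∈ ℝ³ with z_y ≥ 0 and z_z > 0. Then {z}⊥ ∩ K_exp = {(x, 0, 0) : x ≤ 0}. -/
import Mathlib


def Kexp : Set (EuclideanSpace ℝ (Fin 3)) :=
  {v | (0 < v 1 ∧ v 1 * Real.exp (v 0 / v 1) ≤ v 2) ∨ (v 0 ≤ 0 ∧ 0 ≤ v 2 ∧ v 1 = 0)}

theorem exposed_face_Finfty (z : EuclideanSpace ℝ (Fin 3))
    (h0 : z 0 = 0) (hy : 0 ≤ z 1) (hz : 0 < z 2) :
    {q : EuclideanSpace ℝ (Fin 3) | q 0 * z 0 + q 1 * z 1 + q 2 * z 2 = 0} ∩ Kexp =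
      {v | v 0 ≤ 0 ∧ v 1 = 0 ∧ v 2 = 0} := by
  ext q
  simp only [Set.mem_inter_iff, Set.mem_setOf_eq, Kexp]
  constructor
  · rintro ⟨horth, hK⟩
    rw [h0] at horth
    rcases hK with ⟨h1, h2⟩ | ⟨ha, hb, hc⟩
    · exfalso
      have hq2 : 0 < q 2 := lt_of_lt_of_le (mul_pos h1 (Real.exp_pos _)) h2
      nlinarith [mul_nonneg (le_of_lt h1) hy, mul_pos hq2 hz]
    · have hq2 : q 2 = 0 := by
        rw [hc] at horth
        nlinarith
      exact ⟨ha, hc, hq2⟩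
  · rintro ⟨ha, hb, hc⟩
    refine ⟨by rw [hb, hc, h0]; ring, Or.inr ⟨ha, le_of_eq hc.symm, hb⟩⟩
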